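/- Let $H$ be a finite-dimensional Hopf algebra over a field $k$, and let $\Lambda \in H$ be a nonzero left integral. Then $S^2(\Lambda) = \nu_{-1}(H) \Lambda$, where $\nu_{-1}(H) = \mathrm{Trace}(S \circ P^{(-2)})$ and $P^{(-2)}(h) = S(h_{(1)}) S(h_{(2)})$. -/

import Mathlib

set_option maxHeartbeats 1000000
set_option synthInstance.maxHeartbeats 400000

open TensorProduct Coalgebra

namespace HopfAux

variable {k H : Type*} [Field k] [Ring H] [HopfAlgebra k H]

local notation "𝑺" => HopfAlgebra.antipode (R := k) (A := H)
local notation "ε" => Coalgebra.counit (R := k) (A := H)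
local notation "Δ" => Coalgebra.comul (R := k) (A := H)
local notation "μ" => LinearMap.mul' k H

lemma antipode_one : 𝑺 (1 : H) = 1 := by
  have h := HopfAlgebra.mul_antipode_rTensor_comul_apply (R := k) (a := (1 : H))
  simpa [Algebra.TensorProduct.one_def] using h

lemma eq_sum_counit_smul_left {ι : Type*} (x : H) (r : Coalgebra.Repr k x ι) :
    ∑ i ∈ r.index, (ε (r.right i)) • r.left i = x := by
  have h := Coalgebra.sum_tmul_counit_eq (R := k) r
  have h2 : (TensorProduct.rid k H) (∑ i ∈ r.index, r.left i ⊗ₜ[k] ε (r.right i)) = x := by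
    rw [h]; simp
  rw [map_sum] at h2
  simp only [TensorProduct.rid_tmul] at h2
  exact h2

lemma eq_sum_counit_smul_right {ι : Type*} (x : H) (r : Coalgebra.Repr k x ι) :
    ∑ i ∈ r.index, (ε (r.left i)) • r.right i = x := by
  have h := Coalgebra.sum_counit_tmul_eq (R := k) r
  have h2 : (TensorProduct.lid k H) (∑ i ∈ r.index, (ε (r.left i) : k) ⊗ₜ[k] r.right i) = x := by
    rw [h]; simp
  rw [map_sum] at h2
  simp only [TensorProduct.lid_tmul] at h2
  exact h2

lemma counit_antipode (x : H) : ε (𝑺 x) = ε x := by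
  set r := ℛ k x with hr
  have h1 := HopfAlgebra.sum_antipode_mul_eq_algebraMap_counit (R := k) r
  have h2 := congrArg ε h1
  simp only [map_sum, Bialgebra.counit_mul] at h2
  rw [Bialgebra.counit_algebraMap] at h2
  calc ε (𝑺 x) = ε (𝑺 (∑ i ∈ r.index, (ε (r.right i)) • r.left i)) := by
        rw [eq_sum_counit_smul_left x r]
  _ = ∑ i ∈ r.index, ε (r.right i) * ε (𝑺 (r.left i)) := by
        rw [map_sum, map_sum]; exact Finset.sum_congr rfl fun i _ => by
          rw [map_smul, map_smul, smul_eq_mul]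
  _ = ε x := by rw [← h2]; exact Finset.sum_congr rfl fun i _ => mul_comm _ _

/-- A representation of `comul (x * y)` built from representations of `x` and `y`. -/
noncomputable def mulRepr {ιx ιy : Type*} (x y : H) (rx : Coalgebra.Repr k x ιx)
    (ry : Coalgebra.Repr k y ιy) :
    Coalgebra.Repr k (x * y) (ιx × ιy) where
  index := rx.index ×ˢ ry.index
  left := fun p => rx.left p.1 * ry.left p.2
  right := fun p => rx.right p.1 * ry.right p.2
  eq := by
    rw [Bialgebra.comul_mul, ← rx.eq, ← ry.eq, Finset.sum_mul_sum]
    rw [Finset.sum_product]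
    exact Finset.sum_congr rfl fun i _ => Finset.sum_congr rfl fun j _ => by
      rw [Algebra.TensorProduct.tmul_mul_tmul]

noncomputable def Xi : ((H ⊗[k] (H ⊗[k] H)) ⊗[k] (H ⊗[k] (H ⊗[k] H))) →ₗ[k] H :=
  (μ ∘ₗ LinearMap.lTensor H μ) ∘ₗ
  (TensorProduct.map (𝑺 ∘ₗ μ)
    (TensorProduct.map μ
      (μ ∘ₗ TensorProduct.map 𝑺 𝑺 ∘ₗ (TensorProduct.comm k H H).toLinearMap))) ∘ₗ
  (TensorProduct.map LinearMap.id (tensorTensorTensorComm k H H H H).toLinearMap) ∘ₗ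
  (tensorTensorTensorComm k H (H ⊗[k] H) H (H ⊗[k] H)).toLinearMap

lemma Xi_tmul (x y z u v w : H) :
    Xi (k := k) (H := H) ((x ⊗ₜ (y ⊗ₜ z)) ⊗ₜ (u ⊗ₜ (v ⊗ₜ w)))
      = 𝑺 (x * u) * ((y * v) * (𝑺 w * 𝑺 z)) := by
  simp [Xi, tensorTensorTensorComm_tmul]

lemma antipode_mul (g h : H) : 𝑺 (g * h) = 𝑺 h * 𝑺 g := by
  classical
  set rg := ℛ k g with hrg
  set rh := ℛ k h with hrh
  have rg2 : ∀ i, Coalgebra.Repr k (rg.right i) (H × H) := fun i => ℛ k (rg.right i)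
  have rh2 : ∀ j, Coalgebra.Repr k (rh.right j) (H × H) := fun j => ℛ k (rh.right j)
  have rg1 : ∀ i, Coalgebra.Repr k (rg.left i) (H × H) := fun i => ℛ k (rg.left i)
  have rh1 : ∀ j, Coalgebra.Repr k (rh.left j) (H × H) := fun j => ℛ k (rh.left j)
  set Tg := (LinearMap.lTensor H Δ) (Δ g) with hTg
  set Th := (LinearMap.lTensor H Δ) (Δ h) with hTh
  -- right-nested expansion
  have hTgR : Tg = ∑ i ∈ rg.index, ∑ l ∈ (rg2 i).index,
      rg.left i ⊗ₜ[k] ((rg2 i).left l ⊗ₜ[k] (rg2 i).right l) := by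
    rw [hTg, ← rg.eq, map_sum]
    exact Finset.sum_congr rfl fun i _ => by
      rw [LinearMap.lTensor_tmul, ← (rg2 i).eq, tmul_sum]
  have hThR : Th = ∑ j ∈ rh.index, ∑ m ∈ (rh2 j).index,
      rh.left j ⊗ₜ[k] ((rh2 j).left m ⊗ₜ[k] (rh2 j).right m) := by
    rw [hTh, ← rh.eq, map_sum]
    exact Finset.sum_congr rfl fun j _ => by
      rw [LinearMap.lTensor_tmul, ← (rh2 j).eq, tmul_sum]
  -- left-nested expansion
  have hTgL : Tg = ∑ i ∈ rg.index, ∑ l ∈ (rg1 i).index,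
      (rg1 i).left l ⊗ₜ[k] ((rg1 i).right l ⊗ₜ[k] rg.right i) := by
    rw [hTg, ← Coalgebra.coassoc_apply g, ← rg.eq, map_sum, map_sum]
    exact Finset.sum_congr rfl fun i _ => by
      rw [LinearMap.rTensor_tmul, ← (rg1 i).eq, sum_tmul, map_sum]
      exact Finset.sum_congr rfl fun l _ => by rw [assoc_tmul]
  have hThL : Th = ∑ j ∈ rh.index, ∑ m ∈ (rh1 j).index,
      (rh1 j).left m ⊗ₜ[k] ((rh1 j).right m ⊗ₜ[k] rh.right j) := by
    rw [hTh, ← Coalgebra.coassoc_apply h, ← rh.eq, map_sum, map_sum]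
    exact Finset.sum_congr rfl fun j _ => by
      rw [LinearMap.rTensor_tmul, ← (rh1 j).eq, sum_tmul, map_sum]
      exact Finset.sum_congr rfl fun m _ => by rw [assoc_tmul]
  -- Evaluation 1 : via right-nested reprs, Xi (Tg ⊗ Th) = S (g*h)
  have key1 : Xi (k := k) (H := H) (Tg ⊗ₜ[k] Th) = 𝑺 (g * h) := by
    rw [hTgR, hThR]
    rw [sum_tmul]
    rw [map_sum]
    calc ∑ i ∈ rg.index, Xi (k := k) (H := H)
          ((∑ l ∈ (rg2 i).index, rg.left i ⊗ₜ[k] ((rg2 i).left l ⊗ₜ[k] (rg2 i).right l)) ⊗ₜ[k]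
            (∑ j ∈ rh.index, ∑ m ∈ (rh2 j).index,
              rh.left j ⊗ₜ[k] ((rh2 j).left m ⊗ₜ[k] (rh2 j).right m)))
        = ∑ i ∈ rg.index, ∑ l ∈ (rg2 i).index, ∑ j ∈ rh.index, ∑ m ∈ (rh2 j).index,
            𝑺 (rg.left i * rh.left j) *
              (((rg2 i).left l * (rh2 j).left m) *
                (𝑺 ((rh2 j).right m) * 𝑺 ((rg2 i).right l))) := by
          refine Finset.sum_congr rfl fun i _ => ?_
          rw [sum_tmul, map_sum]
          refine Finset.sum_congr rfl fun l _ => ?_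
          rw [tmul_sum, map_sum]
          refine Finset.sum_congr rfl fun j _ => ?_
          rw [tmul_sum, map_sum]
          exact Finset.sum_congr rfl fun m _ => Xi_tmul _ _ _ _ _ _
      _ = ∑ i ∈ rg.index, ∑ l ∈ (rg2 i).index, ∑ j ∈ rh.index,
            ε (rh.right j) • (𝑺 (rg.left i * rh.left j) *
              ((rg2 i).left l * 𝑺 ((rg2 i).right l))) := by
          refine Finset.sum_congr rfl fun i _ => Finset.sum_congr rfl fun l _ =>
            Finset.sum_congr rfl fun j _ => ?_
          have inner : ∑ m ∈ (rh2 j).index,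
              ((rg2 i).left l * (rh2 j).left m) *
                (𝑺 ((rh2 j).right m) * 𝑺 ((rg2 i).right l))
              = ε (rh.right j) • ((rg2 i).left l * 𝑺 ((rg2 i).right l)) := by
            have : ∀ m, ((rg2 i).left l * (rh2 j).left m) *
                (𝑺 ((rh2 j).right m) * 𝑺 ((rg2 i).right l))
                = (rg2 i).left l * (((rh2 j).left m * 𝑺 ((rh2 j).right m)) * 𝑺 ((rg2 i).right l)) := by
              intro m; rw [mul_assoc, ← mul_assoc ((rh2 j).left m)]
            rw [Finset.sum_congr rfl fun m _ => this m, ← Finset.mul_sum, ← Finset.sum_mul,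
              HopfAlgebra.sum_mul_antipode_eq_smul (rh2 j), smul_mul_assoc, mul_smul_comm,
              one_mul]
          rw [← Finset.mul_sum, inner, mul_smul_comm]
      _ = ∑ i ∈ rg.index, ∑ j ∈ rh.index,
            (ε (rg.right i) * ε (rh.right j)) • 𝑺 (rg.left i * rh.left j) := by
          refine Finset.sum_congr rfl fun i _ => ?_
          rw [Finset.sum_comm]
          refine Finset.sum_congr rfl fun j _ => ?_
          rw [← Finset.smul_sum, ← Finset.mul_sum,
            HopfAlgebra.sum_mul_antipode_eq_smul (rg2 i), mul_smul_comm, mul_one,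
            smul_smul, mul_comm (ε (rg.right i))]
      _ = 𝑺 (g * h) := by
          conv_rhs => rw [← eq_sum_counit_smul_left g rg, ← eq_sum_counit_smul_left h rh]
          rw [Finset.sum_mul_sum, map_sum]
          refine Finset.sum_congr rfl fun i _ => ?_
          rw [map_sum]
          refine Finset.sum_congr rfl fun j _ => ?_
          rw [smul_mul_smul_comm, map_smul]
  -- Evaluation 2 : via left-nested reprs, Xi (Tg ⊗ Th) = S h * S g
  have key2 : Xi (k := k) (H := H) (Tg ⊗ₜ[k] Th) = 𝑺 h * 𝑺 g := by
    rw [hTgL, hThL]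
    rw [sum_tmul, map_sum]
    calc ∑ i ∈ rg.index, Xi (k := k) (H := H)
          ((∑ l ∈ (rg1 i).index, (rg1 i).left l ⊗ₜ[k] ((rg1 i).right l ⊗ₜ[k] rg.right i)) ⊗ₜ[k]
            (∑ j ∈ rh.index, ∑ m ∈ (rh1 j).index,
              (rh1 j).left m ⊗ₜ[k] ((rh1 j).right m ⊗ₜ[k] rh.right j)))
        = ∑ i ∈ rg.index, ∑ l ∈ (rg1 i).index, ∑ j ∈ rh.index, ∑ m ∈ (rh1 j).index,
            𝑺 ((rg1 i).left l * (rh1 j).left m) *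
              (((rg1 i).right l * (rh1 j).right m) *
                (𝑺 (rh.right j) * 𝑺 (rg.right i))) := by
          refine Finset.sum_congr rfl fun i _ => ?_
          rw [sum_tmul, map_sum]
          refine Finset.sum_congr rfl fun l _ => ?_
          rw [tmul_sum, map_sum]
          refine Finset.sum_congr rfl fun j _ => ?_
          rw [tmul_sum, map_sum]
          exact Finset.sum_congr rfl fun m _ => Xi_tmul _ _ _ _ _ _
      _ = ∑ i ∈ rg.index, ∑ j ∈ rh.index,
            (ε (rg.left i) * ε (rh.left j)) • (𝑺 (rh.right j) * 𝑺 (rg.right i)) := by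
          refine Finset.sum_congr rfl fun i _ => ?_
          rw [Finset.sum_comm]
          refine Finset.sum_congr rfl fun j _ => ?_
          have inner : ∀ l m, 𝑺 ((rg1 i).left l * (rh1 j).left m) *
              (((rg1 i).right l * (rh1 j).right m) * (𝑺 (rh.right j) * 𝑺 (rg.right i)))
              = (𝑺 ((rg1 i).left l * (rh1 j).left m) *
                  ((rg1 i).right l * (rh1 j).right m)) * (𝑺 (rh.right j) * 𝑺 (rg.right i)) := by
            intro l m; exact (mul_assoc _ _ _).symm
          rw [Finset.sum_congr rfl fun l _ => Finset.sum_congr rfl fun m _ => inner l m]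
          simp only [← Finset.sum_mul]
          have collapse : ∑ l ∈ (rg1 i).index, ∑ m ∈ (rh1 j).index,
              𝑺 ((rg1 i).left l * (rh1 j).left m) * ((rg1 i).right l * (rh1 j).right m)
              = (ε (rg.left i) * ε (rh.left j)) • (1 : H) := by
            have hre := HopfAlgebra.sum_antipode_mul_eq_smul
              (mulRepr (rg.left i) (rh.left j) (rg1 i) (rh1 j))
            rw [Bialgebra.counit_mul] at hre
            rw [← hre]
            simp only [mulRepr]
            exact (Finset.sum_product' (s := (rg1 i).index) (t := (rh1 j).index)
              (f := fun l m =>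
              𝑺 ((rg1 i).left l * (rh1 j).left m) * ((rg1 i).right l * (rh1 j).right m))).symm
          rw [collapse, smul_mul_assoc, one_mul]
      _ = 𝑺 h * 𝑺 g := by
          conv_rhs => rw [← eq_sum_counit_smul_right h rh, ← eq_sum_counit_smul_right g rg]
          rw [map_sum, map_sum, Finset.sum_mul_sum]
          rw [Finset.sum_comm]
          refine Finset.sum_congr rfl fun i _ => ?_
          refine Finset.sum_congr rfl fun j _ => ?_
          rw [map_smul, map_smul, smul_mul_smul_comm, mul_comm (ε (rg.left _))]
  rw [← key1, key2]

/-- Key identity for a left integral: `(1 ⊗ u) Δ(Λ) = (S(u) ⊗ 1) Δ(Λ)`. -/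
lemma integral_shift (Λ : H) (hint : ∀ y : H, y * Λ = (ε y) • Λ) (u : H) :
    ((1 : H) ⊗ₜ[k] u) * Δ Λ = (𝑺 u ⊗ₜ[k] (1 : H)) * Δ Λ := by
  classical
  set ru := ℛ k u with hru
  have ru2 : ∀ i, Coalgebra.Repr k (ru.right i) (H × H) := fun i => ℛ k (ru.right i)
  have hu1 : ∑ i ∈ ru.index, ε (ru.right i) • ru.left i = u := eq_sum_counit_smul_left u ru
  have hu2 : ∑ i ∈ ru.index, ε (ru.left i) • ru.right i = u := eq_sum_counit_smul_right u ru
  set M := ∑ i ∈ ru.index, (𝑺 (ru.left i) ⊗ₜ[k] (1 : H)) * (Δ (ru.right i) * Δ Λ) with hM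
  have stepA : M = (𝑺 u ⊗ₜ[k] (1 : H)) * Δ Λ := by
    have e1 : ∀ i, Δ (ru.right i) * Δ Λ = ε (ru.right i) • Δ Λ := by
      intro i
      rw [← Bialgebra.comul_mul, hint (ru.right i), map_smul]
    conv_rhs => rw [← hu1]
    rw [map_sum, sum_tmul, Finset.sum_mul, hM]
    refine Finset.sum_congr rfl fun i _ => ?_
    rw [e1 i, mul_smul_comm, map_smul, ← smul_tmul', smul_mul_assoc]
  have key : ∑ i ∈ ru.index, (𝑺 (ru.left i) ⊗ₜ[k] (1 : H)) * Δ (ru.right i)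
      = (1 : H) ⊗ₜ[k] u := by
    set θ : H ⊗[k] (H ⊗[k] H) →ₗ[k] H ⊗[k] H :=
      (LinearMap.rTensor H (μ ∘ₗ LinearMap.rTensor H 𝑺)) ∘ₗ
        (TensorProduct.assoc k H H H).symm.toLinearMap with hθ
    have θ_tmul : ∀ (x y z : H), θ (x ⊗ₜ[k] (y ⊗ₜ[k] z)) = (𝑺 x * y) ⊗ₜ[k] z := by
      intro x y z; simp [hθ]
    have lhs_eq : ∑ i ∈ ru.index, (𝑺 (ru.left i) ⊗ₜ[k] (1 : H)) * Δ (ru.right i)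
        = θ ((LinearMap.lTensor H Δ) (Δ u)) := by
      conv_rhs => rw [← ru.eq]
      rw [map_sum, map_sum]
      refine Finset.sum_congr rfl fun i _ => ?_
      rw [LinearMap.lTensor_tmul, ← (ru2 i).eq, tmul_sum, map_sum, Finset.mul_sum]
      refine Finset.sum_congr rfl fun l _ => ?_
      rw [θ_tmul, Algebra.TensorProduct.tmul_mul_tmul, one_mul]
    rw [lhs_eq, ← Coalgebra.coassoc_apply u, hθ, LinearMap.comp_apply]
    rw [LinearEquiv.coe_toLinearMap, LinearEquiv.symm_apply_apply]
    conv_lhs => rw [← ru.eq]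
    rw [map_sum, map_sum]
    conv_rhs => rw [← hu2, tmul_sum]
    refine Finset.sum_congr rfl fun i _ => ?_
    rw [LinearMap.rTensor_tmul, LinearMap.rTensor_tmul, LinearMap.comp_apply,
      HopfAlgebra.mul_antipode_rTensor_comul_apply, Algebra.algebraMap_eq_smul_one,
      ← smul_tmul', tmul_smul]
  have stepB : M = ((1 : H) ⊗ₜ[k] u) * Δ Λ := by
    rw [hM, ← key, Finset.sum_mul]
    exact Finset.sum_congr rfl fun i _ => (mul_assoc _ _ _).symm
  rw [← stepB, stepA]

section Extraction

variable {ι : Type*} [Fintype ι] [DecidableEq ι] (b : Module.Basis ι k H)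
variable (N : Type*) [AddCommGroup N] [Module k N]

/-- Extract the `i`-th coordinate (w.r.t. a basis of the left factor) of an element of `H ⊗ N`. -/
noncomputable def ext (i : ι) : H ⊗[k] N →ₗ[k] N :=
  (TensorProduct.lid k N).toLinearMap ∘ₗ (LinearMap.rTensor N (b.coord i))

lemma ext_tmul (i : ι) (x : H) (y : N) : ext b N i (x ⊗ₜ[k] y) = b.coord i x • y := by
  simp [ext]

lemma sum_ext (t : H ⊗[k] N) : ∑ i, b i ⊗ₜ[k] ext b N i t = t := by
  induction t using TensorProduct.induction_on with
  | zero => simp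
  | tmul x y =>
      have : ∀ i, b i ⊗ₜ[k] ext b N i (x ⊗ₜ[k] y) = (b.coord i x • b i) ⊗ₜ[k] y := by
        intro i; rw [ext_tmul, tmul_smul, smul_tmul']
      rw [Finset.sum_congr rfl fun i _ => this i, ← sum_tmul]
      congr 1
      simpa [Module.Basis.coord_apply] using b.sum_repr x
  | add t₁ t₂ h₁ h₂ =>
      simp only [map_add, tmul_add, Finset.sum_add_distrib, h₁, h₂]

lemma ext_sum (i : ι) (v : ι → N) : ext b N i (∑ j, b j ⊗ₜ[k] v j) = v i := by
  rw [map_sum]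
  rw [Finset.sum_congr rfl fun j _ => ext_tmul b N i (b j) (v j)]
  simp [Module.Basis.coord_apply, Module.Basis.repr_self, Finsupp.single_apply]

end Extraction

section Contractions

/-- Contract a dual vector against the first tensor factor. -/
noncomputable def conL (p : Module.Dual k H) : H ⊗[k] H →ₗ[k] H :=
  (TensorProduct.lid k H).toLinearMap ∘ₗ (LinearMap.rTensor H p)

/-- Contract a dual vector against the second tensor factor. -/
noncomputable def conR (p : Module.Dual k H) : H ⊗[k] H →ₗ[k] H :=
  (TensorProduct.rid k H).toLinearMap ∘ₗ (LinearMap.lTensor H p)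

@[simp] lemma conL_tmul (p : Module.Dual k H) (x y : H) :
    conL p (x ⊗ₜ[k] y) = p x • y := by simp [conL]

@[simp] lemma conR_tmul (p : Module.Dual k H) (x y : H) :
    conR p (x ⊗ₜ[k] y) = p y • x := by simp [conR]

end Contractions

theorem main_thm [FiniteDimensional k H] (Λ : H) (hΛ : Λ ≠ 0)
    (hint : ∀ y : H, y * Λ = (ε y) • Λ) :
    𝑺 (𝑺 Λ) = (LinearMap.trace k H
      (𝑺 ∘ₗ (μ ∘ₗ TensorProduct.map 𝑺 𝑺 ∘ₗ Δ))) • Λ := by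
  classical
  set n := Module.finrank k H with hn
  set b : Module.Basis (Fin n) k H := Module.finBasis k H with hb
  set w : Fin n → H := fun i => ext b H i (Δ Λ) with hwdef
  have hw : Δ Λ = ∑ i, b i ⊗ₜ[k] w i := (sum_ext b H (Δ Λ)).symm
  set c : Fin n → Fin n → H := fun i j => ext b H i (Δ (b j)) with hcdef
  have hbc : ∀ j, Δ (b j) = ∑ i, b i ⊗ₜ[k] c i j := fun j => (sum_ext b H (Δ (b j))).symm
  -- comultiplication of the w i
  have hcw : ∀ i, Δ (w i) = ∑ j, c i j ⊗ₜ[k] w j := by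
    intro i
    have h1 : (LinearMap.lTensor H Δ) (Δ Λ) = ∑ i, b i ⊗ₜ[k] Δ (w i) := by
      rw [hw, map_sum]
      exact Finset.sum_congr rfl fun i _ => by rw [LinearMap.lTensor_tmul]
    have h2 : (LinearMap.lTensor H Δ) (Δ Λ)
        = ∑ i, b i ⊗ₜ[k] (∑ j, c i j ⊗ₜ[k] w j) := by
      rw [← Coalgebra.coassoc_apply Λ, hw, map_sum, map_sum]
      calc ∑ j, (TensorProduct.assoc k H H H) ((LinearMap.rTensor H Δ) (b j ⊗ₜ[k] w j))
          = ∑ j, ∑ i, b i ⊗ₜ[k] (c i j ⊗ₜ[k] w j) := by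
            refine Finset.sum_congr rfl fun j _ => ?_
            rw [LinearMap.rTensor_tmul, hbc j, sum_tmul, map_sum]
            exact Finset.sum_congr rfl fun i _ => by rw [TensorProduct.assoc_tmul]
        _ = ∑ i, b i ⊗ₜ[k] (∑ j, c i j ⊗ₜ[k] w j) := by
            rw [Finset.sum_comm]
            exact Finset.sum_congr rfl fun i _ => by rw [tmul_sum]
    have h3 := h1.symm.trans h2
    have hex := congrArg (ext b (H ⊗[k] H) i) h3
    rw [ext_sum, ext_sum] at hex
    exact hex
  -- counit identities
  have hεb : ∑ i, ε (b i) • w i = Λ := by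
    have h := eq_sum_counit_smul_right Λ (⟨Finset.univ, b, w, hw.symm⟩ : Coalgebra.Repr k Λ (Fin n))
    simpa using h
  have hεw : ∑ i, ε (w i) • b i = Λ := by
    have h := eq_sum_counit_smul_left Λ (⟨Finset.univ, b, w, hw.symm⟩ : Coalgebra.Repr k Λ (Fin n))
    simpa using h
  -- antipode collapse on the w i
  have habs : ∀ i, ∑ j, 𝑺 (c i j) * w j = ε (w i) • 1 := by
    intro i
    have h := HopfAlgebra.sum_antipode_mul_eq_smul (R := k)
      (⟨Finset.univ, c i, w, (hcw i).symm⟩ : Coalgebra.Repr k (w i) (Fin n))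
    simpa using h
  -- coordinatized integral shift
  have hA2 : ∀ u : H, ∑ i, b i ⊗ₜ[k] (u * w i) = ∑ i, (𝑺 u * b i) ⊗ₜ[k] w i := by
    intro u
    have h := integral_shift Λ hint u
    rw [hw, Finset.mul_sum, Finset.mul_sum] at h
    have e1 : ∑ i, ((1 : H) ⊗ₜ[k] u) * (b i ⊗ₜ[k] w i) = ∑ i, b i ⊗ₜ[k] (u * w i) :=
      Finset.sum_congr rfl fun i _ => by
        rw [Algebra.TensorProduct.tmul_mul_tmul, one_mul]
    have e2 : ∑ i, (𝑺 u ⊗ₜ[k] (1 : H)) * (b i ⊗ₜ[k] w i) = ∑ i, (𝑺 u * b i) ⊗ₜ[k] w i :=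
      Finset.sum_congr rfl fun i _ => by
        rw [Algebra.TensorProduct.tmul_mul_tmul, one_mul]
    rw [e1, e2] at h
    exact h
  -- the span of the w i is left-stable and contains 1
  set Wsp := Submodule.span k (Set.range w) with hWsp
  have hWmul : ∀ (u : H) (i : Fin n), u * w i ∈ Wsp := by
    intro u i
    have h1 : u * w i = ext b H i (∑ i, b i ⊗ₜ[k] (u * w i)) :=
      (ext_sum b H i (fun j => u * w j)).symm
    rw [h1, hA2 u, map_sum]
    rw [Finset.sum_congr rfl fun j _ => ext_tmul b H i (𝑺 u * b j) (w j)]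
    exact Submodule.sum_mem _ fun j _ =>
      Submodule.smul_mem _ _ (Submodule.subset_span ⟨j, rfl⟩)
  have hone : (1 : H) ∈ Wsp := by
    by_cases hc : ∀ i, ε (w i) = 0
    · exfalso
      apply hΛ
      rw [← hεw]
      exact Finset.sum_eq_zero fun i _ => by rw [hc i, zero_smul]
    · push_neg at hc
      obtain ⟨i0, hi0⟩ := hc
      have hmem : ∑ j, 𝑺 (c i0 j) * w j ∈ Wsp :=
        Submodule.sum_mem _ fun j _ => hWmul _ j
      rw [habs i0] at hmem
      have h2 := Submodule.smul_mem Wsp (ε (w i0))⁻¹ hmem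
      rwa [smul_smul, inv_mul_cancel₀ hi0, one_smul] at h2
  -- the dual integral λ
  obtain ⟨cf, hcf⟩ := (Submodule.mem_span_range_iff_exists_fun k).mp hone
  set lam : H →ₗ[k] k := ∑ i, cf i • b.coord i with hlamdef
  have hlamb : ∀ j, lam (b j) = cf j := by
    intro j
    rw [hlamdef]
    simp [LinearMap.sum_apply, Module.Basis.coord_apply, Module.Basis.repr_self, Finsupp.single_apply]
  have hlam1 : ∑ i, lam (b i) • w i = 1 := by
    rw [Finset.sum_congr rfl fun i _ => by rw [hlamb i]]
    exact hcf
  -- resolution of the identity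
  have hE1 : ∀ u : H, ∑ i, lam (𝑺 u * b i) • w i = u := by
    intro u
    have h := congrArg (conL (k := k) (H := H) lam) (hA2 u)
    rw [map_sum, map_sum] at h
    simp only [conL_tmul] at h
    calc ∑ i, lam (𝑺 u * b i) • w i = ∑ i, lam (b i) • (u * w i) := h.symm
      _ = u * ∑ i, lam (b i) • w i := by
          rw [Finset.mul_sum]
          exact Finset.sum_congr rfl fun i _ => (mul_smul_comm _ _ _).symm
      _ = u := by rw [hlam1, mul_one]
  -- bijectivity of the antipode
  have hSinj : Function.Injective (𝑺 : H →ₗ[k] H) := by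
    intro x y hxy
    calc x = ∑ i, lam (𝑺 x * b i) • w i := (hE1 x).symm
      _ = ∑ i, lam (𝑺 y * b i) • w i := by rw [show 𝑺 x = 𝑺 y from hxy]
      _ = y := hE1 y
  have hSsurj : Function.Surjective (𝑺 : H →ₗ[k] H) :=
    LinearMap.injective_iff_surjective.mp hSinj
  have hlamΛ : lam Λ = 1 := by
    have h2 := congrArg ε hlam1
    rw [map_sum, Bialgebra.counit_one] at h2
    calc lam Λ = lam (∑ i, ε (w i) • b i) := by rw [hεw]
      _ = ∑ i, ε (w i) * lam (b i) := by
          rw [map_sum]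
          exact Finset.sum_congr rfl fun i _ => by rw [map_smul, smul_eq_mul]
      _ = 1 := by
          rw [← h2]
          exact Finset.sum_congr rfl fun i _ => by
            rw [map_smul, smul_eq_mul, mul_comm]
  -- right absorption for antipodes of left integrals
  have hrabs : ∀ L : H, (∀ y : H, y * L = ε y • L) → ∀ x : H, 𝑺 L * x = ε x • 𝑺 L := by
    intro L hL x
    obtain ⟨g, rfl⟩ := hSsurj x
    rw [← antipode_mul, hL g, map_smul, counit_antipode]
  -- one-dimensionality formula
  have honed : ∀ L : H, (∀ y : H, y * L = ε y • L) → L = lam (𝑺 L) • Λ := by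
    intro L hL
    calc L = ∑ i, lam (𝑺 L * b i) • w i := (hE1 L).symm
      _ = lam (𝑺 L) • ∑ i, ε (b i) • w i := by
          rw [Finset.smul_sum]
          refine Finset.sum_congr rfl fun i _ => ?_
          rw [hrabs L hL (b i), map_smul, smul_eq_mul, smul_smul, mul_comm]
      _ = lam (𝑺 L) • Λ := by rw [hεb]
  have hlamSL : lam (𝑺 Λ) = 1 := by
    have h := honed Λ hint
    have h2 : (lam (𝑺 Λ) - 1) • Λ = 0 := by
      rw [sub_smul, one_smul, ← h, sub_self]
    rcases smul_eq_zero.mp h2 with h3 | h3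
    · exact sub_eq_zero.mp h3
    · exact absurd h3 hΛ
  -- S²Λ is a left integral
  have hint2 : ∀ y : H, y * 𝑺 (𝑺 Λ) = ε y • 𝑺 (𝑺 Λ) := by
    intro y
    obtain ⟨z1, rfl⟩ := hSsurj y
    obtain ⟨z2, rfl⟩ := hSsurj z1
    rw [← antipode_mul, ← antipode_mul, hint z2, map_smul, map_smul,
      counit_antipode, counit_antipode]
  set c0 := lam (𝑺 (𝑺 (𝑺 Λ))) with hc0
  have hS2Λ : 𝑺 (𝑺 Λ) = c0 • Λ := honed _ hint2
  -- the element a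
  set aEl := ∑ i, lam (w i) • b i with haEl
  have hεa : ε aEl = 1 := by
    rw [haEl, map_sum]
    calc ∑ i, ε (lam (w i) • b i) = lam (∑ i, ε (b i) • w i) := by
          rw [map_sum]
          exact Finset.sum_congr rfl fun i _ => by
            rw [map_smul, map_smul, smul_eq_mul, smul_eq_mul, mul_comm]
      _ = 1 := by rw [hεb, hlamΛ]
  -- second contraction identity
  have hE2 : ∀ u : H, ∑ i, lam (u * w i) • b i = 𝑺 u * aEl := by
    intro u
    have h := congrArg (conR (k := k) (H := H) lam) (hA2 u)
    rw [map_sum, map_sum] at h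
    simp only [conR_tmul] at h
    rw [h, haEl, Finset.mul_sum]
    exact Finset.sum_congr rfl fun i _ => (mul_smul_comm _ _ _).symm
  -- S² applied to the resolution of identity
  have hE1S2 : ∀ z : H, ∑ i, lam (𝑺 z * b i) • 𝑺 (𝑺 (w i)) = 𝑺 (𝑺 z) := by
    intro z
    have h := congrArg (fun t => 𝑺 (𝑺 t)) (hE1 z)
    simpa only [map_sum, map_smul] using h
  -- the bilinear form and its nondegeneracy
  set bilin : H →ₗ[k] H →ₗ[k] k := LinearMap.mk₂ k (fun u x => lam (u * x))
    (fun u u' x => by rw [add_mul, map_add])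
    (fun s u x => by rw [smul_mul_assoc, map_smul])
    (fun u x x' => by rw [mul_add, map_add])
    (fun s u x => by rw [mul_smul_comm, map_smul]) with hbilin
  have hbilin_apply : ∀ u x : H, bilin u x = lam (u * x) := fun u x => rfl
  have hLinj : Function.Injective (bilin : H →ₗ[k] Module.Dual k H) := by
    have hker : ∀ u : H, bilin u = 0 → u = 0 := by
      intro u hu
      obtain ⟨z, rfl⟩ := hSsurj u
      have hz : z = 0 := by
        rw [← hE1 z]
        refine Finset.sum_eq_zero fun i _ => ?_
        have h1 : lam (𝑺 z * b i) = bilin (𝑺 z) (b i) := rfl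
        rw [h1, hu]
        simp
      rw [hz, map_zero]
    intro u v huv
    have h1 : bilin (u - v) = 0 := by rw [map_sub, huv, sub_self]
    have h2 := hker _ h1
    exact sub_eq_zero.mp h2
  have hLsurj : Function.Surjective (bilin : H →ₗ[k] Module.Dual k H) :=
    (LinearMap.injective_iff_surjective_of_finrank_eq_finrank
      Subspace.dual_finrank_eq.symm).mp hLinj
  -- the twisted flip identity
  have hFLIP : ∑ i, w i ⊗ₜ[k] b i = ∑ i, b i ⊗ₜ[k] (𝑺 (𝑺 (w i)) * aEl) := by
    have hp : ∀ p : Module.Dual k H,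
        conL (k := k) (H := H) p (∑ i, w i ⊗ₜ[k] b i)
          = conL (k := k) (H := H) p (∑ i, b i ⊗ₜ[k] (𝑺 (𝑺 (w i)) * aEl)) := by
      intro p
      obtain ⟨u, rfl⟩ := hLsurj p
      obtain ⟨z, rfl⟩ := hSsurj u
      rw [map_sum, map_sum]
      simp only [conL_tmul]
      have hL1 : ∑ i, (bilin (𝑺 z)) (w i) • b i = 𝑺 (𝑺 z) * aEl := hE2 (𝑺 z)
      have hR1 : ∑ i, (bilin (𝑺 z)) (b i) • (𝑺 (𝑺 (w i)) * aEl) = 𝑺 (𝑺 z) * aEl := by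
        have h1 : ∀ i, (bilin (𝑺 z)) (b i) • (𝑺 (𝑺 (w i)) * aEl)
            = (lam (𝑺 z * b i) • 𝑺 (𝑺 (w i))) * aEl := fun i => by
          rw [smul_mul_assoc]; rfl
        rw [Finset.sum_congr rfl fun i _ => h1 i, ← Finset.sum_mul, hE1S2 z]
      rw [hL1, hR1]
    have hdiff : ∀ i, ext b H i (∑ j, w j ⊗ₜ[k] b j)
        = ext b H i (∑ j, b j ⊗ₜ[k] (𝑺 (𝑺 (w j)) * aEl)) := fun i => hp (b.coord i)
    calc ∑ i, w i ⊗ₜ[k] b i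
        = ∑ i, b i ⊗ₜ[k] ext b H i (∑ j, w j ⊗ₜ[k] b j) := (sum_ext b H _).symm
      _ = ∑ i, b i ⊗ₜ[k] ext b H i (∑ j, b j ⊗ₜ[k] (𝑺 (𝑺 (w j)) * aEl)) := by
          exact Finset.sum_congr rfl fun i _ => by rw [hdiff i]
      _ = ∑ i, b i ⊗ₜ[k] (𝑺 (𝑺 (w i)) * aEl) := by
          exact Finset.sum_congr rfl fun i _ => by
            rw [ext_sum b H i (fun j => 𝑺 (𝑺 (w j)) * aEl)]
  -- the trace formula
  have htrace : ∀ f : H →ₗ[k] H,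
      LinearMap.trace k H f = ∑ i, lam (𝑺 (f (w i)) * b i) := by
    intro f
    have hfres : f = ∑ i, dualTensorHom k H H
        (((bilin.flip (b i)) ∘ₗ (𝑺 : H →ₗ[k] H)) ⊗ₜ[k] f (w i)) := by
      apply LinearMap.ext; intro x
      rw [LinearMap.sum_apply]
      have h1 : ∀ i, (dualTensorHom k H H
          (((bilin.flip (b i)) ∘ₗ (𝑺 : H →ₗ[k] H)) ⊗ₜ[k] f (w i))) x
          = lam (𝑺 x * b i) • f (w i) := by
        intro i; rw [dualTensorHom_apply]; rfl
      rw [Finset.sum_congr rfl fun i _ => h1 i]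
      calc f x = f (∑ i, lam (𝑺 x * b i) • w i) := by rw [hE1 x]
        _ = ∑ i, lam (𝑺 x * b i) • f (w i) := by rw [map_sum]; simp only [map_smul]
    conv_lhs => rw [hfres]
    rw [map_sum]
    refine Finset.sum_congr rfl fun i _ => ?_
    rw [LinearMap.trace_eq_contract_apply, contractLeft_apply]
    rfl
  -- compute the trace of Φ = S ∘ m ∘ (S ⊗ S) ∘ Δ
  set P : H →ₗ[k] H := μ ∘ₗ TensorProduct.map 𝑺 𝑺 ∘ₗ Δ with hP
  set Φ : H →ₗ[k] H := (𝑺 : H →ₗ[k] H) ∘ₗ P with hΦ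
  set QQ : H →ₗ[k] H := (𝑺 : H →ₗ[k] H) ∘ₗ (𝑺 : H →ₗ[k] H) ∘ₗ P with hQQ
  have hSΦ : ∀ x : H, 𝑺 (Φ x) = QQ x := fun x => rfl
  have hPapp : ∀ (x : H) (r : Fin n → H) (t : Fin n → H),
      Δ x = ∑ j, r j ⊗ₜ[k] t j → P x = ∑ j, 𝑺 (r j) * 𝑺 (t j) := by
    intro x r t hx
    rw [hP]
    simp only [LinearMap.comp_apply, hx, map_sum, TensorProduct.map_tmul,
      LinearMap.mul'_apply]
  have hS2mul : ∀ x y : H, 𝑺 (𝑺 (x * y)) = 𝑺 (𝑺 x) * 𝑺 (𝑺 y) := by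
    intro x y; rw [antipode_mul, antipode_mul]
  -- main trace computation
  have hκ : LinearMap.trace k H Φ = ∑ i, lam (QQ (w i) * b i) := by
    rw [htrace Φ]
    exact Finset.sum_congr rfl fun i _ => by rw [hSΦ]
  have hflipcontr : ∑ i, lam (QQ (w i) * b i)
      = ∑ i, lam (QQ (b i) * (𝑺 (𝑺 (w i)) * aEl)) := by
    have h := congrArg (lam ∘ₗ μ ∘ₗ LinearMap.rTensor H QQ) hFLIP
    rw [map_sum, map_sum] at h
    simpa only [LinearMap.comp_apply, LinearMap.rTensor_tmul, LinearMap.mul'_apply] using h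
  have hsum2 : ∑ i, QQ (b i) * 𝑺 (𝑺 (w i)) = 𝑺 (𝑺 (𝑺 Λ)) := by
    have hQb : ∀ j, QQ (b j) = 𝑺 (𝑺 (∑ i, 𝑺 (b i) * 𝑺 (c i j))) := by
      intro j
      rw [hQQ]
      simp only [LinearMap.comp_apply]
      rw [hPapp (b j) b (fun i => c i j) (hbc j)]
    have h1 : ∀ j, QQ (b j) * 𝑺 (𝑺 (w j))
        = 𝑺 (𝑺 ((∑ i, 𝑺 (b i) * 𝑺 (c i j)) * w j)) := by
      intro j; rw [hS2mul, hQb j]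
    rw [Finset.sum_congr rfl fun j _ => h1 j]
    have h2 : ∑ j, (∑ i, 𝑺 (b i) * 𝑺 (c i j)) * w j = 𝑺 Λ := by
      calc ∑ j, (∑ i, 𝑺 (b i) * 𝑺 (c i j)) * w j
          = ∑ j, ∑ i, 𝑺 (b i) * (𝑺 (c i j) * w j) := by
            refine Finset.sum_congr rfl fun j _ => ?_
            rw [Finset.sum_mul]
            exact Finset.sum_congr rfl fun i _ => mul_assoc _ _ _
        _ = ∑ i, 𝑺 (b i) * (∑ j, 𝑺 (c i j) * w j) := by
            rw [Finset.sum_comm]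
            exact Finset.sum_congr rfl fun i _ => (Finset.mul_sum _ _ _).symm
        _ = ∑ i, ε (w i) • 𝑺 (b i) := by
            refine Finset.sum_congr rfl fun i _ => ?_
            rw [habs i, mul_smul_comm, mul_one]
        _ = 𝑺 Λ := by
            rw [← hεw, map_sum]
            exact Finset.sum_congr rfl fun i _ => by rw [map_smul]
    calc ∑ j, 𝑺 (𝑺 ((∑ i, 𝑺 (b i) * 𝑺 (c i j)) * w j))
        = 𝑺 (𝑺 (∑ j, (∑ i, 𝑺 (b i) * 𝑺 (c i j)) * w j)) := by
          rw [map_sum, map_sum]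
      _ = 𝑺 (𝑺 (𝑺 Λ)) := by rw [h2]
  have hfinal : LinearMap.trace k H Φ = c0 := by
    calc LinearMap.trace k H Φ = ∑ i, lam (QQ (w i) * b i) := hκ
      _ = ∑ i, lam (QQ (b i) * (𝑺 (𝑺 (w i)) * aEl)) := hflipcontr
      _ = lam ((∑ i, QQ (b i) * 𝑺 (𝑺 (w i))) * aEl) := by
          rw [Finset.sum_mul, map_sum]
          exact Finset.sum_congr rfl fun i _ => by rw [mul_assoc]
      _ = lam (𝑺 (𝑺 (𝑺 Λ)) * aEl) := by rw [hsum2]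
      _ = c0 := by
          rw [hS2Λ, map_smul, smul_mul_assoc, map_smul, hrabs Λ hint aEl, hεa,
            one_smul, hlamSL, smul_eq_mul, mul_one]
  rw [hfinal]
  exact hS2Λ

end HopfAux


open TensorProduct


/-- For a finite-dimensional Hopf algebra `H` over a field `k` and a nonzero left integral
`Λ ∈ H`, one has `S²(Λ) = ν₋₁(H) Λ`, where `ν₋₁(H) = Trace(S ∘ P⁽⁻²⁾)` and
`P⁽⁻²⁾ = S ⋆ S` is the `(-2)`-nd Sweedler power map, `P⁽⁻²⁾(h) = S(h₍₁₎) S(h₍₂₎)`. -/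
theorem antipode_sq_integral {k H : Type*} [Field k] [Ring H] [HopfAlgebra k H]
    [FiniteDimensional k H] (Λ : H) (hΛ : Λ ≠ 0)
    (hint : ∀ h : H, h * Λ = (Coalgebra.counit (R := k) h) • Λ) :
    HopfAlgebra.antipode (R := k) (HopfAlgebra.antipode (R := k) Λ)
      = (LinearMap.trace k H
          (HopfAlgebra.antipode (R := k) ∘ₗ
            (LinearMap.mul' k H ∘ₗ
              TensorProduct.map (HopfAlgebra.antipode (R := k)) (HopfAlgebra.antipode (R := k))
                ∘ₗ Coalgebra.comul))) • Λ :=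
  HopfAux.main_thm Λ hΛ hint
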